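/- Under assumptions A1–A3 and r_t → ∞, the triangular array X_{t,k} given by the centered variables Z_{d,i}(t) − p_d satisfies the Lindeberg condition: for every ε > 0, lim_{t→∞} (1/σ_t²) ∑_{d=0}^t ∑_{i=1}^{c_d} E[(Z_{d,i}(t) − p_d)² · 1{|Z_{d,i}(t) − p_d| > ε σ_t}] = 0. -/

import Mathlib

open MeasureTheory ProbabilityTheory Finset Filter

/-- under A1–A3 and r_t → ∞, the triangular array of centered
    variables Z_{d,i}(t) − p_d satisfies the Lindeberg condition. -/
theorem lindeberg_condition
    {Ω : Type*} [MeasureSpace Ω] [IsProbabilityMeasure (ℙ : Measure Ω)]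
    (c : ℕ → ℕ) (p : ℕ → ℝ) (F : ℕ → ℕ → ℝ) (D I S : ℝ)
    (M : ℕ → ℕ → ℕ → Ω → ℝ) (Z : ℕ → ℕ → ℕ → Ω → ℝ) (r σ : ℕ → ℝ)
    (hr : ∀ t, r t = ∑ d ∈ Finset.range (t + 1), (c d : ℝ))
    (hZ : ∀ t d i ω, Z t d i ω = M t d i ω / F d (t - d))
    (hMmeas : ∀ t d i, Measurable (M t d i))
    (hM01 : ∀ t d i ω, M t d i ω = 0 ∨ M t d i ω = 1)
    (hE : ∀ t, ∀ d ∈ Finset.range (t + 1), ∀ i ∈ Finset.range (c d),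
      (∫ ω, M t d i ω ∂ℙ) = p d * F d (t - d))
    (hIndep : ∀ t, iIndepFun
      (fun di : ℕ × ℕ => M t di.1 di.2) ℙ)
    -- A1
    (hD : 0 < D) (hD0 : ∀ d, D ≤ F d 0) (hFmono : ∀ d, Monotone (F d))
    (hF1 : ∀ d k, F d k ≤ 1)
    -- A2 and A3
    (hI : 0 < I) (hIp : ∀ d, I ≤ p d) (hS : S < 1) (hpS : ∀ d, p d ≤ S)
    (hσ : ∀ t, 0 ≤ σ t)
    (hσ2 : ∀ t, σ t ^ 2 = ∑ d ∈ Finset.range (t + 1),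
        ∑ i ∈ Finset.range (c d), variance (Z t d i) ℙ)
    (hrinf : Tendsto r atTop atTop) :
    ∀ ε > (0 : ℝ),
      Tendsto (fun t => (1 / σ t ^ 2) *
        ∑ d ∈ Finset.range (t + 1), ∑ i ∈ Finset.range (c d),
          ∫ ω, (if ε * σ t < |Z t d i ω - p d|
                then (Z t d i ω - p d) ^ 2 else 0) ∂ℙ)
        atTop (nhds 0) := by
  intro ε hε
  set B := max 1 (1 / D) with hBdef
  have hBpos : (0 : ℝ) < B := lt_of_lt_of_le one_pos (le_max_left _ _)
  have hB1 : (1 : ℝ) ≤ B := le_max_left _ _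
  -- positivity of F
  have hFpos : ∀ d k, 0 < F d k := fun d k =>
    lt_of_lt_of_le hD (le_trans (hD0 d) (hFmono d (Nat.zero_le k)))
  have hFinv : ∀ d k, 1 / F d k ≤ B := fun d k =>
    le_trans (by
      rw [div_le_div_iff₀ (hFpos d k) hD]
      simpa using le_trans (hD0 d) (hFmono d (Nat.zero_le k))) (le_max_right _ _)
  have hp0 : ∀ d, 0 < p d := fun d => lt_of_lt_of_le hI (hIp d)
  have hp1 : ∀ d, p d < 1 := fun d => lt_of_le_of_lt (hpS d) hS
  -- uniform bound on |Z - p|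
  have hbound : ∀ t d i ω, |Z t d i ω - p d| ≤ B := by
    intro t d i ω
    rw [hZ]
    rcases hM01 t d i ω with h0 | h1
    · rw [h0]
      simp only [zero_div, zero_sub, abs_neg]
      rw [abs_of_pos (hp0 d)]
      exact le_trans (le_of_lt (hp1 d)) hB1
    · rw [h1]
      have h1F : (1 : ℝ) ≤ 1 / F d (t - d) := by
        rw [le_div_iff₀ (hFpos d (t - d))]
        simpa using hF1 d (t - d)
      rw [abs_of_nonneg (by linarith [hp1 d] : (0:ℝ) ≤ 1 / F d (t - d) - p d)]
      have := hFinv d (t - d)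
      linarith [hp0 d]
  -- variance lower bound
  have hvar : ∀ t, ∀ d ∈ Finset.range (t + 1), ∀ i ∈ Finset.range (c d),
      I * (1 - S) ≤ variance (Z t d i) ℙ := by
    intro t d hd i hi
    set f := F d (t - d) with hf
    have hfpos : 0 < f := hFpos d (t - d)
    have hf1 : f ≤ 1 := hF1 d (t - d)
    have hZmeas : Measurable (Z t d i) := by
      have : Z t d i = fun ω => M t d i ω / f := by
        funext ω; exact hZ t d i ω
      rw [this]
      exact (hMmeas t d i).div_const f
    have hZb : ∀ ω, ‖Z t d i ω‖ ≤ 1 / f := by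
      intro ω
      rw [hZ]
      rcases hM01 t d i ω with h0 | h1
      · rw [h0]; simp; positivity
      · rw [h1]; rw [Real.norm_eq_abs, abs_of_pos (by positivity)]
    have hmem : MemLp (Z t d i) 2 ℙ :=
      MemLp.of_bound hZmeas.aestronglyMeasurable (1 / f) (ae_of_all _ hZb)
    have hEZ : (∫ ω, Z t d i ω ∂ℙ) = p d := by
      calc (∫ ω, Z t d i ω ∂ℙ) = ∫ ω, M t d i ω / f ∂ℙ := by
            exact integral_congr_ae (ae_of_all _ fun ω => hZ t d i ω)
        _ = (∫ ω, M t d i ω ∂ℙ) / f := integral_div f _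
        _ = p d * f / f := by rw [hE t d hd i hi]
        _ = p d := by field_simp
    have hEZ2 : (∫ ω, (Z t d i ω) ^ 2 ∂ℙ) = p d / f := by
      have hpt : ∀ ω, (Z t d i ω) ^ 2 = M t d i ω / f ^ 2 := by
        intro ω
        rw [hZ]
        rcases hM01 t d i ω with h0 | h1
        · rw [h0]; simp
        · rw [h1, ← hf, one_div_pow]
      calc (∫ ω, (Z t d i ω) ^ 2 ∂ℙ) = ∫ ω, M t d i ω / f ^ 2 ∂ℙ :=
            integral_congr_ae (ae_of_all _ hpt)
        _ = (∫ ω, M t d i ω ∂ℙ) / f ^ 2 := integral_div _ _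
        _ = p d * f / f ^ 2 := by rw [hE t d hd i hi]
        _ = p d / f := by field_simp
    have hv : variance (Z t d i) ℙ = p d / f - (p d) ^ 2 := by
      rw [variance_eq_sub hmem]
      simp only [Pi.pow_apply]
      rw [hEZ, hEZ2]
    rw [hv]
    have h1 : p d ≤ p d / f := by
      rw [le_div_iff₀ hfpos]
      nlinarith [hp0 d]
    have h2 : I * (1 - S) ≤ p d * (1 - p d) := by
      have := hIp d
      have := hpS d
      nlinarith [hp0 d]
    nlinarith
  -- sigma^2 lower bound
  have hσlb : ∀ t, I * (1 - S) * r t ≤ σ t ^ 2 := by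
    intro t
    rw [hσ2, hr]
    rw [Finset.mul_sum]
    apply Finset.sum_le_sum
    intro d hd
    calc I * (1 - S) * (c d : ℝ)
        = ∑ _i ∈ Finset.range (c d), I * (1 - S) := by
          rw [Finset.sum_const, Finset.card_range, nsmul_eq_mul]; ring
      _ ≤ ∑ i ∈ Finset.range (c d), variance (Z t d i) ℙ :=
          Finset.sum_le_sum fun i hi => hvar t d hd i hi
  have hIS : 0 < I * (1 - S) := by nlinarith
  have hσ2top : Tendsto (fun t => σ t ^ 2) atTop atTop :=
    tendsto_atTop_mono hσlb (hrinf.const_mul_atTop hIS)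
  -- eventually ε * σ t > B
  have hev : ∀ᶠ t in atTop, B < ε * σ t := by
    filter_upwards [hσ2top.eventually_gt_atTop ((B / ε) ^ 2)] with t ht
    have hσt : B / ε < σ t :=
      lt_of_pow_lt_pow_left₀ 2 (hσ t) ht
    rw [div_lt_iff₀ hε] at hσt
    linarith [hσt]
    
  have hzero : ∀ᶠ t in atTop, (1 / σ t ^ 2) *
      (∑ d ∈ Finset.range (t + 1), ∑ i ∈ Finset.range (c d),
        ∫ ω, (if ε * σ t < |Z t d i ω - p d|
              then (Z t d i ω - p d) ^ 2 else 0) ∂ℙ) = 0 := by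
    filter_upwards [hev] with t ht
    have hint : ∀ d i, (∫ ω, (if ε * σ t < |Z t d i ω - p d|
        then (Z t d i ω - p d) ^ 2 else 0) ∂ℙ) = 0 := by
      intro d i
      have : ∀ ω, (if ε * σ t < |Z t d i ω - p d|
          then (Z t d i ω - p d) ^ 2 else 0) = 0 := by
        intro ω
        rw [if_neg]
        push_neg
        exact le_trans (hbound t d i ω) (le_of_lt ht)
      simp only [this, integral_zero]
    simp only [hint, Finset.sum_const_zero, mul_zero]
  exact tendsto_const_nhds.congr' (hzero.mono fun t h => h.symm)
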